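/- arXiv:2005.08743 — 2 statements merged into one kernel-verified Lean document; each statement's English description precedes it below -/
import Mathlib

section
/- Let φ_t be the flow of u with Jacobian determinant Φ_t, let γ_t(x̂) = ∫_0^t Φ_s^{-1}(φ_s(x̂)) ds, and for boundary data I_0, I_1 define Ĩ(x̂,t) = (γ_t(x̂)/γ_1(x̂))·[I_1(φ_1(x̂)) − I_0(x̂)] + I_0(x̂) and I(x,t) = Ĩ(φ_t^{-1}(x), t). Then I satisfies the inhomogeneous transport equation ∂_t I + u·∇I = λ_{φ_t^{-1}(x)} Φ_t^{-1}(x), where λ_{x̂} = [I_1(φ_1(x̂)) − I_0(x̂)]/γ_1(x̂), together with I(·,0) = I_0 and I(φ_1(x̂),1) = I_1(φ_1(x̂)). -/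
open intervalIntegral MeasureTheory


theorem contDiff_clm_det {d : ℕ} {n : ℕ∞} :
    ContDiff ℝ n (fun A : (Fin d → ℝ) →L[ℝ] (Fin d → ℝ) =>
      LinearMap.det (A : (Fin d → ℝ) →ₗ[ℝ] (Fin d → ℝ))) := by
  have h : (fun A : (Fin d → ℝ) →L[ℝ] (Fin d → ℝ) =>
      LinearMap.det (A : (Fin d → ℝ) →ₗ[ℝ] (Fin d → ℝ)))
      = fun A => ∑ σ : Equiv.Perm (Fin d),
          ((Equiv.Perm.sign σ : ℤ) : ℝ) * ∏ i, A (fun j' => if j' = i then (1:ℝ) else 0) (σ i) := by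
    funext A
    rw [← LinearMap.det_toMatrix' (A : (Fin d → ℝ) →ₗ[ℝ] (Fin d → ℝ)), Matrix.det_apply']
    have hs : ∀ i : Fin d, (Pi.single i (1:ℝ) : Fin d → ℝ) = fun j' => if j' = i then 1 else 0 :=
      fun i => funext fun j' => Pi.single_apply i (1:ℝ) j'
    simp [LinearMap.toMatrix'_apply, hs]
  rw [h]
  refine ContDiff.sum fun σ _ => contDiff_const.mul (contDiff_prod fun i _ => ?_)
  exact ((ContinuousLinearMap.proj (σ i) : (Fin d → ℝ) →L[ℝ] ℝ).comp
    (ContinuousLinearMap.apply ℝ (Fin d → ℝ) (fun j' => if j' = i then (1:ℝ) else 0) :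
      ((Fin d → ℝ) →L[ℝ] (Fin d → ℝ)) →L[ℝ] (Fin d → ℝ))).contDiff

open intervalIntegral MeasureTheory

theorem param_integral_diff {d : ℕ} {F : (Fin d → ℝ) → ℝ → ℝ}
    (hF : ContDiff ℝ 1 (fun p : (Fin d → ℝ) × ℝ => F p.1 p.2)) (x₀ : Fin d → ℝ) (t₀ : ℝ) :
    DifferentiableAt ℝ (fun p : (Fin d → ℝ) × ℝ => ∫ s in (0:ℝ)..p.2, F p.1 s) (x₀, t₀) := by
  have hcont : Continuous (fun p : (Fin d → ℝ) × ℝ => F p.1 p.2) := hF.continuous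
  have hcx : ∀ x : Fin d → ℝ, Continuous (fun s => F x s) :=
    fun x => hcont.comp (continuous_const.prodMk continuous_id)
  -- partial derivative in x
  set DF : (Fin d → ℝ) × ℝ → (Fin d → ℝ) →L[ℝ] ℝ :=
    fun p => fderiv ℝ (fun y => F y p.2) p.1 with hDF
  have hDFc : Continuous DF := by
    have : ContDiff ℝ 0 (fun p : (Fin d → ℝ) × ℝ => fderiv ℝ (fun y => F y p.2) p.1) := by
      apply ContDiff.fderiv (f := fun (p : (Fin d → ℝ) × ℝ) (y : Fin d → ℝ) => F y p.2)
        (g := fun p => p.1) (m := 1)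
      · exact hF.comp (contDiff_snd.prodMk (contDiff_snd.comp contDiff_fst))
      · exact contDiff_fst
      · norm_num
    exact this.continuous
  have hpart : ∀ (x : Fin d → ℝ) (s : ℝ), HasFDerivAt (fun y => F y s) (DF (x, s)) x := by
    intro x s
    have : DifferentiableAt ℝ (fun y => F y s) x := by
      have h := ((hF.differentiable one_ne_zero) (x, s)).comp x (f := fun y : Fin d → ℝ => (y, s))
        (differentiableAt_id.prodMk (differentiableAt_const s))
      exact h
    exact this.hasFDerivAt
  -- A part : fixed upper limit t₀, derivative in x
  obtain ⟨C, hC⟩ : ∃ C, ∀ p ∈ (Metric.closedBall x₀ 1) ×ˢ (Set.uIcc (0:ℝ) t₀), ‖DF p‖ ≤ C := by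
    rcases ((isCompact_closedBall x₀ 1).prod isCompact_uIcc).exists_bound_of_continuousOn
      hDFc.continuousOn with ⟨C, hC⟩
    exact ⟨C, hC⟩
  have hA : HasFDerivAt (fun x => ∫ s in (0:ℝ)..t₀, F x s) (∫ s in (0:ℝ)..t₀, DF (x₀, s)) x₀ := by
    apply intervalIntegral.hasFDerivAt_integral_of_dominated_of_fderiv_le
      (F' := fun x s => DF (x, s)) (bound := fun _ => C) (s := Metric.ball x₀ 1) (Metric.ball_mem_nhds x₀ one_pos)
    · exact Filter.Eventually.of_forall fun x => (hcx x).aestronglyMeasurable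
    · exact (hcx x₀).intervalIntegrable 0 t₀
    · exact (hDFc.comp (continuous_const.prodMk continuous_id)).aestronglyMeasurable
    · refine Filter.Eventually.of_forall fun s hs => fun x hx => ?_
      exact hC (x, s) ⟨Metric.ball_subset_closedBall hx, Set.uIoc_subset_uIcc hs⟩
    · exact intervalIntegrable_const
    · exact Filter.Eventually.of_forall fun s _ => fun x _ => hpart x s
  have hA' : HasFDerivAt (fun p : (Fin d → ℝ) × ℝ => ∫ s in (0:ℝ)..t₀, F p.1 s)
      ((∫ s in (0:ℝ)..t₀, DF (x₀, s)).comp (ContinuousLinearMap.fst ℝ (Fin d → ℝ) ℝ)) (x₀, t₀) :=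
    by have h := hA.comp (x₀, t₀) (hasFDerivAt_fst (𝕜 := ℝ) (p := (x₀, t₀))); exact h
  -- B part : moving upper limit
  have hB : HasFDerivAt (fun p : (Fin d → ℝ) × ℝ => ∫ s in t₀..p.2, F p.1 s)
      (F x₀ t₀ • ContinuousLinearMap.snd ℝ (Fin d → ℝ) ℝ) (x₀, t₀) := by
    rw [hasFDerivAt_iff_isLittleO_nhds_zero]
    rw [Asymptotics.isLittleO_iff]
    intro c hc
    obtain ⟨δ, hδpos, hδ⟩ := Metric.continuousAt_iff.1 hcont.continuousAt c hc
    have hmem : Metric.ball (0 : (Fin d → ℝ) × ℝ) δ ∈ nhds (0 : (Fin d → ℝ) × ℝ) :=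
      Metric.ball_mem_nhds _ hδpos
    filter_upwards [hmem] with q hq
    -- q = (v, τ) small
    have hτ : |q.2| < δ := by
      simp only [Metric.mem_ball, dist_zero_right] at hq
      calc |q.2| = ‖q.2‖ := rfl
        _ ≤ ‖q‖ := norm_snd_le q
        _ < δ := hq
    have hv : dist (x₀ + q.1) x₀ < δ := by
      simp only [Metric.mem_ball, dist_zero_right] at hq
      calc dist (x₀ + q.1) x₀ = ‖q.1‖ := by simp [dist_eq_norm]
        _ ≤ ‖q‖ := norm_fst_le q
        _ < δ := hq
    have key : ∀ s ∈ Set.uIoc t₀ (t₀ + q.2), |F (x₀ + q.1) s - F x₀ t₀| ≤ c := by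
      intro s hs
      have hs' : |s - t₀| ≤ |q.2| := by
        rcases Set.mem_uIoc.1 hs with ⟨h1, h2⟩ | ⟨h1, h2⟩ <;> rw [abs_le] <;> constructor <;>
          nlinarith [le_abs_self q.2, neg_abs_le q.2]
      have hd : dist ((x₀ + q.1, s)) ((x₀, t₀) : (Fin d → ℝ) × ℝ) < δ := by
        rw [Prod.dist_eq]
        exact max_lt hv (lt_of_le_of_lt (by simpa [Real.dist_eq] using hs') hτ)
      have := hδ hd
      rw [Real.dist_eq] at this
      exact le_of_lt this
    have hint : IntervalIntegrable (fun s => F (x₀ + q.1) s) volume t₀ (t₀ + q.2) :=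
      (hcx _).intervalIntegrable _ _
    have heq : (∫ s in t₀..(t₀ + q.2), F (x₀ + q.1) s) - F x₀ t₀ * q.2
        = ∫ s in t₀..(t₀ + q.2), (F (x₀ + q.1) s - F x₀ t₀) := by
      rw [intervalIntegral.integral_sub hint intervalIntegrable_const,
        intervalIntegral.integral_const]
      ring_nf
    have hbnd : ‖∫ s in t₀..(t₀ + q.2), (F (x₀ + q.1) s - F x₀ t₀)‖ ≤ c * |(t₀ + q.2) - t₀| :=
      intervalIntegral.norm_integral_le_of_norm_le_const (by
        intro s hs
        simpa using key s hs)
    simp only [ContinuousLinearMap.coe_smul', Pi.smul_apply, ContinuousLinearMap.coe_snd',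
      smul_eq_mul]
    calc ‖(∫ s in t₀..((x₀, t₀) + q).2, F ((x₀, t₀) + q).1 s)
          - (∫ s in t₀..(x₀, t₀).2, F (x₀, t₀).1 s) - F x₀ t₀ * q.2‖
        = ‖(∫ s in t₀..(t₀ + q.2), F (x₀ + q.1) s) - F x₀ t₀ * q.2‖ := by
          simp [Prod.fst_add, Prod.snd_add, intervalIntegral.integral_same]
      _ = ‖∫ s in t₀..(t₀ + q.2), (F (x₀ + q.1) s - F x₀ t₀)‖ := by rw [heq]
      _ ≤ c * |(t₀ + q.2) - t₀| := hbnd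
      _ = c * ‖q.2‖ := by rw [show t₀ + q.2 - t₀ = q.2 by ring]; rfl
      _ ≤ c * ‖q‖ := by
          exact mul_le_mul_of_nonneg_left (norm_snd_le q) (le_of_lt hc)
  -- combine
  have hsplit : (fun p : (Fin d → ℝ) × ℝ => ∫ s in (0:ℝ)..p.2, F p.1 s)
      = fun p => (∫ s in (0:ℝ)..t₀, F p.1 s) + ∫ s in t₀..p.2, F p.1 s := by
    funext p
    rw [intervalIntegral.integral_add_adjacent_intervals ((hcx p.1).intervalIntegrable 0 t₀)
      ((hcx p.1).intervalIntegrable t₀ p.2)]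
  rw [hsplit]
  exact (hA'.add hB).differentiableAt


/-- The Jacobian determinant of a map at a point. -/
noncomputable def jacDet {d : ℕ} (f : ((Fin d) → ℝ) → ((Fin d) → ℝ)) (x : (Fin d) → ℝ) : ℝ :=
  LinearMap.det
    ((fderiv ℝ f x : ((Fin d) → ℝ) →L[ℝ] ((Fin d) → ℝ)) :
      ((Fin d) → ℝ) →ₗ[ℝ] ((Fin d) → ℝ))

/-- with `φ_t` the flow of `u`, `Φinv x t = det D(φ_t⁻¹)(x)`,
`γ_t(xh) = ∫_0^t Φinv(φ_s(xh), s) ds`, `lam xh = (I1(φ_1 xh) - I0 xh)/γ_1(xh)`,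
`Ĩ(xh,t) = (γ_t(xh)/γ_1(xh))(I1(φ_1 xh) - I0 xh) + I0 xh` and `I(x,t) = Ĩ(φ_t⁻¹ x, t)`,
the function `I` satisfies the inhomogeneous transport equation
`∂_t I + u·∇I = lam(φ_t⁻¹ x) Φinv(x,t)` together with `I(·,0) = I0` and
`I(φ_1 xh, 1) = I1(φ_1 xh)`. -/
theorem metamorphosis_analytic_solution
    {d : ℕ}
    (u : ((Fin d) → ℝ) → ℝ → ((Fin d) → ℝ))
    (hu : ContDiff ℝ 2 (fun p : ((Fin d) → ℝ) × ℝ => u p.1 p.2))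
    (φ ψ : ℝ → ((Fin d) → ℝ) → ((Fin d) → ℝ))
    (hφ : ContDiff ℝ 2 (fun p : ((Fin d) → ℝ) × ℝ => φ p.2 p.1))
    (hψ : ContDiff ℝ 2 (fun p : ((Fin d) → ℝ) × ℝ => ψ p.2 p.1))
    (hφ0 : ∀ xh, φ 0 xh = xh)
    (hflow : ∀ xh t, HasDerivAt (fun s => φ s xh) (u (φ t xh) t) t)
    (hinv : ∀ t, Function.LeftInverse (ψ t) (φ t) ∧ Function.RightInverse (ψ t) (φ t))
    (I0 I1 : ((Fin d) → ℝ) → ℝ)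
    (hI0 : Differentiable ℝ I0) (hI1 : Differentiable ℝ I1)
    (Φinv : ((Fin d) → ℝ) → ℝ → ℝ)
    (hΦinv : ∀ x t, Φinv x t = jacDet (ψ t) x)
    (γ : ((Fin d) → ℝ) → ℝ → ℝ)
    (hγ : ∀ xh t, γ xh t = ∫ s in (0:ℝ)..t, Φinv (φ s xh) s)
    (hγ1 : ∀ xh, γ xh 1 ≠ 0)
    (lam : ((Fin d) → ℝ) → ℝ)
    (hlam : ∀ xh, lam xh = (I1 (φ 1 xh) - I0 xh) / γ xh 1)
    (Itil : ((Fin d) → ℝ) → ℝ → ℝ)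
    (hItil : ∀ xh t, Itil xh t = (γ xh t / γ xh 1) * (I1 (φ 1 xh) - I0 xh) + I0 xh)
    (I : ((Fin d) → ℝ) → ℝ → ℝ)
    (hI : ∀ x t, I x t = Itil (ψ t x) t) :
    (∀ x t,
        deriv (fun s => I x s) t
          + ∑ i, u x t i * fderiv ℝ (fun y => I y t) x (Pi.single i 1)
        = lam (ψ t x) * Φinv x t) ∧
    (∀ x, I x 0 = I0 x) ∧
    (∀ xh, I (φ 1 xh) 1 = I1 (φ 1 xh)) := by
  classical
  -- the integrand of γ, jointly C¹
  set F : (Fin d → ℝ) → ℝ → ℝ := fun xh s => Φinv (φ s xh) s with hFdef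
  have hFj : ContDiff ℝ 1 (fun p : (Fin d → ℝ) × ℝ => F p.1 p.2) := by
    have hfd : ContDiff ℝ 1 (fun p : (Fin d → ℝ) × ℝ => fderiv ℝ (ψ p.2) (φ p.2 p.1)) := by
      apply ContDiff.fderiv (f := fun (p : (Fin d → ℝ) × ℝ) (y : Fin d → ℝ) => ψ p.2 y)
        (g := fun p : (Fin d → ℝ) × ℝ => φ p.2 p.1) (m := 2) (n := 1)
      · exact hψ.comp (contDiff_snd.prodMk (contDiff_snd.comp contDiff_fst))
      · exact hφ.of_le (by norm_num)
      · norm_num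
    have heq : (fun p : (Fin d → ℝ) × ℝ => F p.1 p.2)
        = (fun A : (Fin d → ℝ) →L[ℝ] (Fin d → ℝ) => LinearMap.det (A : (Fin d → ℝ) →ₗ[ℝ] (Fin d → ℝ)))
          ∘ (fun p : (Fin d → ℝ) × ℝ => fderiv ℝ (ψ p.2) (φ p.2 p.1)) := by
      funext p
      show Φinv (φ p.2 p.1) p.2 = _
      rw [Function.comp_apply, hΦinv, jacDet]
    rw [heq]
    exact contDiff_clm_det.comp hfd
  have hγfun : (fun q : (Fin d → ℝ) × ℝ => γ q.1 q.2) = fun q => ∫ s in (0:ℝ)..q.2, F q.1 s :=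
    funext fun q => hγ q.1 q.2
  have hGdiff : ∀ q : (Fin d → ℝ) × ℝ, DifferentiableAt ℝ (fun q : (Fin d → ℝ) × ℝ => γ q.1 q.2) q := by
    intro q
    rw [hγfun]
    have := param_integral_diff hFj q.1 q.2
    simpa using this
  have hψj : Differentiable ℝ (fun p : (Fin d → ℝ) × ℝ => ψ p.2 p.1) := hψ.differentiable (by norm_num)
  have hφ1d : Differentiable ℝ (φ 1) := by
    have : (φ 1) = (fun p : (Fin d → ℝ) × ℝ => φ p.2 p.1) ∘ (fun y : Fin d → ℝ => (y, (1:ℝ))) := rfl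
    rw [this]
    exact (hφ.differentiable (by norm_num)).comp (differentiable_id.prodMk (differentiable_const 1))
  -- the explicit form of I, jointly differentiable
  set Iexp : (Fin d → ℝ) × ℝ → ℝ := fun p =>
    (γ (ψ p.2 p.1) p.2 / γ (ψ p.2 p.1) 1) * (I1 (φ 1 (ψ p.2 p.1)) - I0 (ψ p.2 p.1))
      + I0 (ψ p.2 p.1) with hIexp
  have hIeq : (fun p : (Fin d → ℝ) × ℝ => I p.1 p.2) = Iexp := by
    funext p
    rw [hI, hItil]
  have hIdiff : ∀ p : (Fin d → ℝ) × ℝ, DifferentiableAt ℝ Iexp p := by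
    intro p
    have hw : DifferentiableAt ℝ (fun q : (Fin d → ℝ) × ℝ => ψ q.2 q.1) p := hψj p
    have h1 : DifferentiableAt ℝ (fun q : (Fin d → ℝ) × ℝ => γ (ψ q.2 q.1) q.2) p :=
      by have h := (hGdiff (ψ p.2 p.1, p.2)).comp p (hw.prodMk differentiableAt_snd); exact h
    have h2 : DifferentiableAt ℝ (fun q : (Fin d → ℝ) × ℝ => γ (ψ q.2 q.1) 1) p :=
      by have h := (hGdiff (ψ p.2 p.1, 1)).comp p (hw.prodMk (differentiableAt_const (1:ℝ))); exact h
    have h4 : DifferentiableAt ℝ (fun q : (Fin d → ℝ) × ℝ => I1 (φ 1 (ψ q.2 q.1))) p :=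
      (hI1 _).comp p ((hφ1d _).comp p hw)
    have h5 : DifferentiableAt ℝ (fun q : (Fin d → ℝ) × ℝ => I0 (ψ q.2 q.1)) p :=
      (hI0 _).comp p hw
    have h12 : DifferentiableAt ℝ
        (fun q : (Fin d → ℝ) × ℝ => γ (ψ q.2 q.1) q.2 / γ (ψ q.2 q.1) 1) p :=
      by
      have h3 : (fun q : (Fin d → ℝ) × ℝ => γ (ψ q.2 q.1) 1) p ≠ 0 := hγ1 _
      simp only [div_eq_mul_inv]
      exact h1.mul (h2.inv h3)
    have h45 : DifferentiableAt ℝ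
        (fun q : (Fin d → ℝ) × ℝ => I1 (φ 1 (ψ q.2 q.1)) - I0 (ψ q.2 q.1)) p :=
      h4.sub h5
    exact (h12.mul h45).add h5
  refine ⟨?_, ?_, ?_⟩
  · intro x t
    set xh := ψ t x with hxh
    have hx : φ t xh = x := (hinv t).2 x
    set Df := fderiv ℝ Iexp (x, t) with hDfdef
    have hDf : HasFDerivAt Iexp Df (x, t) := (hIdiff (x, t)).hasFDerivAt
    -- time derivative
    have h_t : deriv (fun s => I x s) t = Df ((0 : Fin d → ℝ), (1 : ℝ)) := by
      have hcomp : HasDerivAt (fun s => Iexp (x, s)) (Df ((0 : Fin d → ℝ), (1 : ℝ))) t :=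
        hDf.comp_hasDerivAt t ((hasDerivAt_const t x).prodMk (hasDerivAt_id t))
      have : (fun s => I x s) = fun s => Iexp (x, s) := funext fun s => congrFun hIeq (x, s)
      rw [this]
      exact hcomp.deriv
    -- space derivative
    set T : (Fin d → ℝ) →L[ℝ] ℝ := Df.comp ((ContinuousLinearMap.id ℝ (Fin d → ℝ)).prod (0 : (Fin d → ℝ) →L[ℝ] ℝ)) with hTdef
    have h_x : fderiv ℝ (fun y => I y t) x = T := by
      have hincl : HasFDerivAt (fun y : Fin d → ℝ => ((y, t) : (Fin d → ℝ) × ℝ))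
          ((ContinuousLinearMap.id ℝ (Fin d → ℝ)).prod (0 : (Fin d → ℝ) →L[ℝ] ℝ)) x :=
        (hasFDerivAt_id x).prodMk (hasFDerivAt_const t x)
      have hcomp : HasFDerivAt (fun y : Fin d → ℝ => Iexp (y, t)) T x := by have h := hDf.comp x hincl; exact h
      have : (fun y => I y t) = fun y : Fin d → ℝ => Iexp (y, t) := funext fun y => congrFun hIeq (y, t)
      rw [this]
      exact hcomp.fderiv
    have hsum : ∑ i, u x t i * fderiv ℝ (fun y => I y t) x (Pi.single i 1) = T (u x t) := by
      rw [h_x]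
      have hv : u x t = ∑ i, u x t i • (Pi.single i (1:ℝ) : Fin d → ℝ) := by
        funext j
        simp [Pi.single_apply, mul_ite]
      conv_rhs => rw [hv]
      rw [map_sum]
      exact Finset.sum_congr rfl fun i _ => by
        rw [ContinuousLinearMap.map_smul, smul_eq_mul]
    have hT : T (u x t) = Df (u x t, (0:ℝ)) := by
      simp [hTdef]
    -- chain rule along characteristics
    have hcurve : HasDerivAt (fun s => ((φ s xh, s) : (Fin d → ℝ) × ℝ)) ((u x t, (1:ℝ))) t := by
      have := (hflow xh t).prodMk (hasDerivAt_id t)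
      rw [hx] at this
      exact this
    have hchain : HasDerivAt (fun s => Iexp (φ s xh, s)) (Df (u x t, (1:ℝ))) t :=
      hDf.comp_hasDerivAt_of_eq t hcurve (by rw [hx])
    have hId : (fun s => Iexp (φ s xh, s)) = fun s => Itil xh s := by
      funext s
      rw [← congrFun hIeq (φ s xh, s)]
      show I (φ s xh) s = Itil xh s
      rw [hI, (hinv s).1 xh]
    rw [hId] at hchain
    -- FTC derivative
    have hgc : Continuous (fun s => F xh s) :=
      hFj.continuous.comp (continuous_const.prodMk continuous_id)
    have hγd : HasDerivAt (fun s => γ xh s) (F xh t) t := by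
      have h8 : (fun s => γ xh s) = fun s => ∫ σ in (0:ℝ)..s, F xh σ := funext fun s => hγ xh s
      rw [h8]
      exact intervalIntegral.integral_hasDerivAt_right (hgc.intervalIntegrable 0 t)
        (hgc.stronglyMeasurableAtFilter _ _) hgc.continuousAt
    have hFTC : HasDerivAt (fun s => Itil xh s) (lam xh * F xh t) t := by
      have hItd : (fun s => Itil xh s)
          = fun s => (γ xh s / γ xh 1) * (I1 (φ 1 xh) - I0 xh) + I0 xh :=
        funext fun s => hItil xh s
      rw [hItd]
      have h6 : HasDerivAt
          (fun s => (γ xh s / γ xh 1) * (I1 (φ 1 xh) - I0 xh) + I0 xh)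
          ((F xh t / γ xh 1) * (I1 (φ 1 xh) - I0 xh)) t :=
        ((hγd.div_const _).mul_const _).add_const _
      convert h6 using 1
      rw [hlam]
      ring
    have huniq : Df (u x t, (1:ℝ)) = lam xh * F xh t := hchain.unique hFTC
    have hsplit : Df ((0 : Fin d → ℝ), (1:ℝ)) + Df (u x t, (0:ℝ)) = Df (u x t, (1:ℝ)) := by
      rw [← map_add]
      congr 1
      simp
    rw [h_t, hsum, hT, hsplit, huniq]
    have : F xh t = Φinv x t := by rw [hFdef]; simp only []; rw [hx]
    rw [this]
  · intro x
    have hψ0 : ψ 0 x = x := by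
      have h := (hinv 0).2 x
      rw [hφ0] at h
      exact h
    rw [hI, hItil, hψ0, hγ, intervalIntegral.integral_same]
    simp
  · intro xh
    rw [hI, hItil, (hinv 1).1 xh, div_self (hγ1 xh)]
    ring
end

section
/- Trace inequality for the graph space: under Assumption 1 there exists a constant C > 0 depending only on Ω and u such that for every I ∈ G(b;Ω) and i = 0,1, ‖I‖²_{L²(Γ_i)} ≤ C ( ‖I‖²_{L²(Ω)} + ‖b·∇_t I‖²_{L²(Ω)} ). -/
open MeasureTheory

open scoped ENNReal NNReal
open Set Real

section Aux
variable {d : ℕ}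

lemma aux_img {L : NNReal} {τ : ((Fin d) → ℝ) → ((Fin d) → ℝ)} (hτ : LipschitzWith L τ)
    (s : Set ((Fin d) → ℝ)) :
    volume (τ '' s) ≤ (L : ℝ≥0∞) ^ (d : ℝ) * volume s := by
  have h := hτ.hausdorffMeasure_image_le (d := (d : ℝ)) (by positivity) s
  have hpi : (μH[(d:ℝ)] : Measure ((Fin d) → ℝ)) = volume := by
    have := hausdorffMeasure_pi_real (ι := Fin d)
    simpa [Fintype.card_fin] using this
  rwa [hpi] at h

lemma aux_cov {L : NNReal} {σ τ : ((Fin d) → ℝ) → ((Fin d) → ℝ)}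
    (hσ : Measurable σ) (hτ : LipschitzWith L τ)
    (hinv : ∀ A : Set ((Fin d) → ℝ), σ ⁻¹' A = τ '' A)
    {h : ((Fin d) → ℝ) → ℝ≥0∞} (hh : Measurable h) :
    ∫⁻ x, h (σ x) ≤ (L : ℝ≥0∞) ^ (d : ℝ) * ∫⁻ y, h y := by
  have hmap : Measure.map σ volume ≤ ((L : ℝ≥0∞) ^ (d : ℝ)) • volume := by
    refine Measure.le_intro (fun A hA _ => ?_)
    rw [Measure.map_apply hσ hA, hinv A, Measure.smul_apply, smul_eq_mul]
    exact aux_img hτ A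
  calc ∫⁻ x, h (σ x) = ∫⁻ y, h y ∂(Measure.map σ volume) := (lintegral_map hh hσ).symm
    _ ≤ ∫⁻ y, h y ∂(((L : ℝ≥0∞) ^ (d : ℝ)) • volume) := lintegral_mono' hmap le_rfl
    _ = (L : ℝ≥0∞) ^ (d : ℝ) * ∫⁻ y, h y := lintegral_smul_measure _ _

lemma aux_phi_lip {u : ℝ × ((Fin d) → ℝ) → ((Fin d) → ℝ)} {K : NNReal}
    (hu_lip : ∀ t, LipschitzWith K (fun x => u (t, x)))
    {φ : ℝ → ((Fin d) → ℝ) → ((Fin d) → ℝ)}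
    (hφ0 : ∀ xh, φ 0 xh = xh)
    (hflow : ∀ xh t, HasDerivAt (fun s => φ s xh) (u (t, φ t xh)) t)
    {t : ℝ} (ht : t ∈ Set.Icc (0:ℝ) 1) (x y : (Fin d) → ℝ) :
    ‖φ t x - φ t y‖ ≤ Real.exp K * ‖x - y‖ := by
  have key := norm_le_gronwallBound_of_norm_deriv_right_le (a := 0) (b := 1)
    (f := fun s => φ s x - φ s y)
    (f' := fun s => u (s, φ s x) - u (s, φ s y)) (δ := ‖x - y‖) (K := (K:ℝ)) (ε := 0)
    (fun s _ => (((hflow x s).sub (hflow y s)).continuousAt.continuousWithinAt))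
    (fun s _ => ((hflow x s).sub (hflow y s)).hasDerivWithinAt)
    (by simp [hφ0])
    (fun s _ => by
      simp only [add_zero]
      have := (hu_lip s).dist_le_mul (φ s x) (φ s y)
      simpa [dist_eq_norm] using this)
  have h := key t ht
  rw [gronwallBound_ε0] at h
  refine h.trans ?_
  have he : Real.exp ((K:ℝ) * (t - 0)) ≤ Real.exp K :=
    Real.exp_le_exp.2 (by rw [sub_zero]; calc (K:ℝ)*t ≤ K*1 := mul_le_mul_of_nonneg_left ht.2 K.coe_nonneg
      _ = K := mul_one _)
  nlinarith [norm_nonneg (x - y), Real.exp_pos ((K:ℝ) * (t - 0))]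

lemma aux_phi_lip_rev {u : ℝ × ((Fin d) → ℝ) → ((Fin d) → ℝ)} {K : NNReal}
    (hu_lip : ∀ t, LipschitzWith K (fun x => u (t, x)))
    {φ : ℝ → ((Fin d) → ℝ) → ((Fin d) → ℝ)}
    (hφ0 : ∀ xh, φ 0 xh = xh)
    (hflow : ∀ xh t, HasDerivAt (fun s => φ s xh) (u (t, φ t xh)) t)
    {t : ℝ} (ht : t ∈ Set.Icc (0:ℝ) 1) (x y : (Fin d) → ℝ) :
    ‖x - y‖ ≤ Real.exp K * ‖φ t x - φ t y‖ := by
  have hder : ∀ (z : (Fin d) → ℝ) (s : ℝ),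
      HasDerivAt (fun s => φ (t - s) z) ((-1 : ℝ) • u (t - s, φ (t - s) z)) s := by
    intro z s
    exact (hflow z (t - s)).scomp s ((hasDerivAt_id s).const_sub t)
  have key := norm_le_gronwallBound_of_norm_deriv_right_le (a := 0) (b := t)
    (f := fun s => φ (t - s) x - φ (t - s) y)
    (f' := fun s => (-1 : ℝ) • u (t - s, φ (t - s) x) - (-1 : ℝ) • u (t - s, φ (t - s) y))
    (δ := ‖φ t x - φ t y‖) (K := (K:ℝ)) (ε := 0)
    (fun s _ => (((hder x s).sub (hder y s)).continuousAt.continuousWithinAt))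
    (fun s _ => ((hder x s).sub (hder y s)).hasDerivWithinAt)
    (by simp)
    (fun s _ => by
      simp only [add_zero, ← smul_sub, norm_smul, norm_neg, norm_one]
      have := (hu_lip (t - s)).dist_le_mul (φ (t - s) x) (φ (t - s) y)
      simpa [dist_eq_norm] using this)
  have h := key t ⟨le_refl t |>.trans' ht.1, le_refl t⟩
  rw [gronwallBound_ε0] at h
  simp only [sub_self, hφ0] at h
  refine h.trans ?_
  have he : Real.exp ((K:ℝ) * (t - 0)) ≤ Real.exp K :=
    Real.exp_le_exp.2 (by rw [sub_zero]; calc (K:ℝ)*t ≤ K*1 := mul_le_mul_of_nonneg_left ht.2 K.coe_nonneg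
      _ = K := mul_one _)
  nlinarith [norm_nonneg (φ t x - φ t y), Real.exp_pos ((K:ℝ) * (t - 0))]

lemma aux_ftc {F g : ℝ → ℝ} (hd : ∀ t, HasDerivAt F (g t) t) (mg : Measurable g)
    (hF2 : IntegrableOn (fun t => F t ^ 2) (Set.Icc (0:ℝ) 1) volume)
    (hg2 : IntegrableOn (fun t => g t ^ 2) (Set.Icc (0:ℝ) 1) volume) :
    F 0 ^ 2 ≤ 2 * ∫ t in Set.Icc (0:ℝ) 1, (F t ^ 2 + g t ^ 2) ∧
    F 1 ^ 2 ≤ 2 * ∫ t in Set.Icc (0:ℝ) 1, (F t ^ 2 + g t ^ 2) := by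
  set j := ∫ t in Set.Icc (0:ℝ) 1, (F t ^ 2 + g t ^ 2) with hj
  have hFc : Continuous F := continuous_iff_continuousAt.2 fun t => (hd t).continuousAt
  set D : ℝ → ℝ := fun t => (2:ℕ) * F t ^ 1 * g t with hD
  have hd2 : ∀ t, HasDerivAt (fun s => F s ^ 2) (D t) t := fun t => (hd t).pow 2
  have hsum : IntegrableOn (fun t => F t ^ 2 + g t ^ 2) (Set.Icc (0:ℝ) 1) volume :=
    hF2.add hg2
  have hDm : Measurable D := (measurable_const.mul ((hFc.measurable).pow_const 1)).mul mg
  have hDbound : ∀ t, ‖D t‖ ≤ F t ^ 2 + g t ^ 2 := by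
    intro t
    simp only [hD, Real.norm_eq_abs, pow_one, Nat.cast_ofNat]
    refine abs_le.2 ⟨by nlinarith [sq_nonneg (F t + g t)], by nlinarith [sq_nonneg (F t - g t)]⟩
  have hDint : IntegrableOn D (Set.Icc (0:ℝ) 1) volume := by
    refine Integrable.mono' hsum (hDm.aestronglyMeasurable) ?_
    exact Filter.Eventually.of_forall fun t => hDbound t
  have key : ∀ a b : ℝ, 0 ≤ a → a ≤ b → b ≤ 1 → |∫ s in a..b, D s| ≤ j := by
    intro a b ha hab hb1
    have hsub : Set.Ioc a b ⊆ Set.Icc (0:ℝ) 1 := fun s hs =>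
      ⟨le_trans ha (le_of_lt hs.1), le_trans hs.2 hb1⟩
    have hDab : IntervalIntegrable D volume a b := by
      rw [intervalIntegrable_iff, uIoc_of_le hab]
      exact hDint.mono_set hsub
    have h1 : |∫ s in a..b, D s| ≤ ∫ s in a..b, |D s| := by
      simpa [Real.norm_eq_abs] using intervalIntegral.norm_integral_le_integral_norm (μ := volume)
        (f := D) (a := a) (b := b) hab
    refine h1.trans ?_
    rw [intervalIntegral.integral_of_le hab]
    calc ∫ s in Set.Ioc a b, |D s| ≤ ∫ s in Set.Ioc a b, (F s ^ 2 + g s ^ 2) := by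
          refine setIntegral_mono_on ((hDint.mono_set hsub).abs) (hsum.mono_set hsub)
            measurableSet_Ioc (fun s _ => by simpa [Real.norm_eq_abs] using hDbound s)
      _ ≤ j := by
          rw [hj]
          refine setIntegral_mono_set hsum ?_ (HasSubset.Subset.eventuallyLE hsub)
          exact Filter.Eventually.of_forall fun s => by positivity
  have hintD : ∀ a b : ℝ, 0 ≤ a → a ≤ b → b ≤ 1 → IntervalIntegrable D volume a b := by
    intro a b ha hab hb1
    rw [intervalIntegrable_iff, uIoc_of_le hab]
    exact hDint.mono_set fun s hs => ⟨le_trans ha (le_of_lt hs.1), le_trans hs.2 hb1⟩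
  have h0 : ∀ t ∈ Set.Icc (0:ℝ) 1, F 0 ^ 2 ≤ F t ^ 2 + j := by
    intro t ht
    have ftc : (∫ s in (0:ℝ)..t, D s) = F t ^ 2 - F 0 ^ 2 :=
      intervalIntegral.integral_eq_sub_of_hasDerivAt (fun s _ => hd2 s)
        (hintD 0 t le_rfl ht.1 ht.2)
    have := key 0 t le_rfl ht.1 ht.2
    rw [ftc] at this
    cases abs_le.1 this with
    | intro h1 h2 => linarith
  have h1 : ∀ t ∈ Set.Icc (0:ℝ) 1, F 1 ^ 2 ≤ F t ^ 2 + j := by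
    intro t ht
    have ftc : (∫ s in t..(1:ℝ), D s) = F 1 ^ 2 - F t ^ 2 :=
      intervalIntegral.integral_eq_sub_of_hasDerivAt (fun s _ => hd2 s)
        (hintD t 1 ht.1 ht.2 le_rfl)
    have := key t 1 ht.1 ht.2 le_rfl
    rw [ftc] at this
    cases abs_le.1 this with
    | intro ha hb => linarith
  have havg : ∀ c : ℝ, (∀ t ∈ Set.Icc (0:ℝ) 1, c ≤ F t ^ 2 + j) → c ≤ 2 * j := by
    intro c hc
    have hFj : (∫ t in Set.Icc (0:ℝ) 1, F t ^ 2) ≤ j := by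
      rw [hj]
      exact setIntegral_mono_on hF2 hsum measurableSet_Icc (fun t _ => by nlinarith [sq_nonneg (g t)])
    have hmono : (∫ t in Set.Icc (0:ℝ) 1, c) ≤ ∫ t in Set.Icc (0:ℝ) 1, (F t ^ 2 + j) :=
      setIntegral_mono_on (integrableOn_const (by simp [Real.volume_Icc]))
        (hF2.add (integrableOn_const (by simp [Real.volume_Icc])))
        measurableSet_Icc hc
    rw [setIntegral_const] at hmono
    rw [integral_add hF2 (integrableOn_const (by simp [Real.volume_Icc])),
      setIntegral_const] at hmono
    simp only [Real.volume_real_Icc, sub_zero, max_eq_left zero_le_one, one_smul] at hmono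
    linarith
  exact ⟨havg _ h0, havg _ h1⟩

end Aux

/-- Trace inequality, Theorem 2: under Assumption 1 (a spatially Lipschitz
velocity field `u` whose flow consists of diffeomorphisms of `ω` with uniformly bounded
inverse Jacobian determinant), there is `C > 0` depending only on `Ω = [0,1] × ω` and `u`
such that every `I` in the graph space of the material derivative `b·∇_t I = ∂_t I + u·∇I`
satisfies `‖I‖²_{L²(Γ_i)} ≤ C (‖I‖²_{L²(Ω)} + ‖b·∇_t I‖²_{L²(Ω)})` for `i = 0,1`. -/
theorem trace_inequality_graph_space
    {d : ℕ} (ω : Set ((Fin d) → ℝ)) (hω : MeasurableSet ω)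
    (u : ℝ × ((Fin d) → ℝ) → ((Fin d) → ℝ)) (K : NNReal)
    (hu_lip : ∀ t, LipschitzWith K (fun x => u (t, x)))
    (hu_cont : Continuous u)
    (φ ψ : ℝ → ((Fin d) → ℝ) → ((Fin d) → ℝ))
    (hφ0 : ∀ xh, φ 0 xh = xh)
    (hflow : ∀ xh t, HasDerivAt (fun s => φ s xh) (u (t, φ t xh)) t)
    (hbij : ∀ t ∈ Set.Icc (0:ℝ) 1, Set.BijOn (φ t) ω ω ∧
              Function.LeftInverse (ψ t) (φ t) ∧ Function.RightInverse (ψ t) (φ t))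
    (Cu : ℝ)
    (hCu : ∀ t ∈ Set.Icc (0:ℝ) 1, ∀ x ∈ ω,
        |LinearMap.det ((fderiv ℝ (ψ t) x :
            ((Fin d) → ℝ) →L[ℝ] ((Fin d) → ℝ)) :
            ((Fin d) → ℝ) →ₗ[ℝ] ((Fin d) → ℝ))| ≤ Cu) :
    ∃ C > 0, ∀ I : ℝ × ((Fin d) → ℝ) → ℝ,
      Differentiable ℝ I →
      IntegrableOn (fun p => (I p) ^ 2) (Set.Icc (0:ℝ) 1 ×ˢ ω) volume →
      IntegrableOn (fun p => (fderiv ℝ I p (1, u p)) ^ 2) (Set.Icc (0:ℝ) 1 ×ˢ ω) volume →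
      (∫ x in ω, (I (0, x)) ^ 2 ∂volume) ≤
          C * ((∫ p in Set.Icc (0:ℝ) 1 ×ˢ ω, (I p) ^ 2 ∂volume)
            + (∫ p in Set.Icc (0:ℝ) 1 ×ˢ ω, (fderiv ℝ I p (1, u p)) ^ 2 ∂volume)) ∧
      (∫ x in ω, (I (1, x)) ^ 2 ∂volume) ≤
          C * ((∫ p in Set.Icc (0:ℝ) 1 ×ˢ ω, (I p) ^ 2 ∂volume)
            + (∫ p in Set.Icc (0:ℝ) 1 ×ˢ ω, (fderiv ℝ I p (1, u p)) ^ 2 ∂volume)) := by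
  classical
  set L : ℝ≥0 := Real.toNNReal (Real.exp K) with hLdef
  have hL : (L : ℝ) = Real.exp K := Real.coe_toNNReal _ (Real.exp_nonneg _)
  set M : ℝ≥0∞ := (L : ℝ≥0∞) ^ (d : ℝ) with hMdef
  have hM_ne_top : M ≠ ⊤ := ENNReal.rpow_ne_top_of_nonneg (by positivity) ENNReal.coe_ne_top
  have hM1 : 1 ≤ M := by
    rw [hMdef, ← ENNReal.one_rpow (d : ℝ)]
    refine ENNReal.rpow_le_rpow ?_ (by positivity)
    rw [show (1 : ℝ≥0∞) = ((1:ℝ≥0) : ℝ≥0∞) from rfl, ENNReal.coe_le_coe]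
    have : (1:ℝ) ≤ (L : ℝ) := by rw [hL]; exact Real.one_le_exp (by positivity)
    exact_mod_cast this
  -- Lipschitz estimates for the flow and its inverse
  have hφLip : ∀ t ∈ Set.Icc (0:ℝ) 1, LipschitzWith L (φ t) := by
    intro t ht
    refine LipschitzWith.of_dist_le_mul fun x y => ?_
    rw [dist_eq_norm, dist_eq_norm, hL]
    exact aux_phi_lip hu_lip hφ0 hflow ht x y
  have hψLip : ∀ t ∈ Set.Icc (0:ℝ) 1, LipschitzWith L (ψ t) := by
    intro t ht
    refine LipschitzWith.of_dist_le_mul fun a b => ?_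
    rw [dist_eq_norm, dist_eq_norm, hL]
    have := aux_phi_lip_rev hu_lip hφ0 hflow ht (ψ t a) (ψ t b)
    rwa [(hbij t ht).2.2 a, (hbij t ht).2.2 b] at this
  have hφpre : ∀ t ∈ Set.Icc (0:ℝ) 1, ∀ A : Set ((Fin d) → ℝ), (φ t) ⁻¹' A = ψ t '' A := by
    intro t ht A
    ext x
    constructor
    · intro hx; exact ⟨φ t x, hx, (hbij t ht).2.1 x⟩
    · rintro ⟨a, ha, rfl⟩; simpa [Set.mem_preimage, (hbij t ht).2.2 a] using ha
  have hψpre : ∀ t ∈ Set.Icc (0:ℝ) 1, ∀ A : Set ((Fin d) → ℝ), (ψ t) ⁻¹' A = φ t '' A := by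
    intro t ht A
    ext x
    constructor
    · intro hx; exact ⟨ψ t x, hx, (hbij t ht).2.2 x⟩
    · rintro ⟨a, ha, rfl⟩; simpa [Set.mem_preimage, (hbij t ht).2.1 a] using ha
  -- the constant
  refine ⟨2 * (M * M).toReal + 1, by positivity, ?_⟩
  intro I hI hI2 hg2
  set S := Set.Icc (0:ℝ) 1 ×ˢ ω with hSdef
  have h1m : (1:ℝ) ∈ Set.Icc (0:ℝ) 1 := ⟨zero_le_one, le_rfl⟩
  -- the clamped flow, jointly continuous
  set cl : ℝ → ℝ := fun t => max 0 (min 1 t) with hcl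
  have hcl_mem : ∀ t, cl t ∈ Set.Icc (0:ℝ) 1 := fun t =>
    ⟨le_max_left _ _, max_le (by norm_num) (min_le_left _ _)⟩
  have hcl_eq : ∀ t ∈ Set.Icc (0:ℝ) 1, cl t = t := by
    intro t ht
    rw [hcl]
    simp only [min_eq_right ht.2, max_eq_right ht.1]
  have hclc : Continuous cl := continuous_const.max (continuous_const.min continuous_id)
  have hΦswap : Continuous fun q : ((Fin d) → ℝ) × ℝ => φ (cl q.2) q.1 := by
    refine continuous_prod_of_continuous_lipschitzWith _ L (fun x => ?_)
      (fun t => hφLip (cl t) (hcl_mem t))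
    exact (continuous_iff_continuousAt.2 fun s => (hflow x s).continuousAt).comp hclc
  set Φ : ℝ × ((Fin d) → ℝ) → ((Fin d) → ℝ) := fun p => φ (cl p.1) p.2 with hΦdef
  have hΦc : Continuous Φ := hΦswap.comp (continuous_snd.prodMk continuous_fst)
  have hcm : Continuous fun p : ℝ × ((Fin d) → ℝ) => (p.1, Φ p) := continuous_fst.prodMk hΦc
  set Fc : ℝ × ((Fin d) → ℝ) → ℝ := fun p => I (p.1, Φ p) with hFcdef
  have hFcc : Continuous Fc := hI.continuous.comp hcm
  set gc : ℝ × ((Fin d) → ℝ) → ℝ := fun p => (fderiv ℝ I (p.1, Φ p)) (1, u (p.1, Φ p)) with hgcdef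
  have hgcm : Measurable gc := by
    have m2 : Measurable fun p : ℝ × ((Fin d) → ℝ) => fderiv ℝ I (p.1, Φ p) :=
      (measurable_fderiv ℝ I).comp hcm.measurable
    have vcont : Continuous fun p : ℝ × ((Fin d) → ℝ) => ((1:ℝ), u (p.1, Φ p)) :=
      continuous_const.prodMk (hu_cont.comp hcm)
    exact (isBoundedBilinearMap_apply.continuous.measurable).comp (m2.prodMk vcont.measurable)
  set Q : ℝ × ((Fin d) → ℝ) → ℝ≥0∞ :=
    fun p => ENNReal.ofReal (Fc p ^ 2) + ENNReal.ofReal (gc p ^ 2) with hQdef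
  have hQm : Measurable Q :=
    ((hFcc.measurable.pow_const 2).ennreal_ofReal).add ((hgcm.pow_const 2).ennreal_ofReal)
  -- measures
  set μ1 := volume.restrict (Set.Icc (0:ℝ) 1) with hμ1
  set μ2 := volume.restrict ω with hμ2
  have hprod : μ1.prod μ2 = volume.restrict S := by
    rw [hμ1, hμ2, Measure.prod_restrict, hSdef, ← Measure.volume_eq_prod]
  -- the data integrals
  set A := ∫⁻ p in S, ENNReal.ofReal ((I p) ^ 2) with hAdef
  set B := ∫⁻ p in S, ENNReal.ofReal ((fderiv ℝ I p (1, u p)) ^ 2) with hBdef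
  have hA : A = ENNReal.ofReal (∫ p in S, (I p) ^ 2) :=
    (ofReal_integral_eq_lintegral_ofReal hI2 (ae_of_all _ fun p => sq_nonneg _)).symm
  have hB : B = ENNReal.ofReal (∫ p in S, (fderiv ℝ I p (1, u p)) ^ 2) :=
    (ofReal_integral_eq_lintegral_ofReal hg2 (ae_of_all _ fun p => sq_nonneg _)).symm
  have hAne : A ≠ ⊤ := by rw [hA]; exact ENNReal.ofReal_ne_top
  have hBne : B ≠ ⊤ := by rw [hB]; exact ENNReal.ofReal_ne_top
  have hABne : A + B ≠ ⊤ := ENNReal.add_ne_top.2 ⟨hAne, hBne⟩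
  have hAtoReal : A.toReal = ∫ p in S, (I p) ^ 2 := by
    rw [hA, ENNReal.toReal_ofReal (integral_nonneg fun p => sq_nonneg _)]
  have hBtoReal : B.toReal = ∫ p in S, (fderiv ℝ I p (1, u p)) ^ 2 := by
    rw [hB, ENNReal.toReal_ofReal (integral_nonneg fun p => sq_nonneg _)]
  -- change of variables steps
  have step_φ : ∀ t ∈ Set.Icc (0:ℝ) 1, ∀ h : ((Fin d) → ℝ) → ℝ≥0∞, Measurable h →
      (∫⁻ x in ω, h (φ t x)) ≤ M * ∫⁻ y in ω, h y := by
    intro t ht h mh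
    have hmaps : Set.MapsTo (φ t) ω ω := (hbij t ht).1.mapsTo
    have hind : Measurable (ω.indicator h) := mh.indicator hω
    calc ∫⁻ x in ω, h (φ t x)
        = ∫⁻ x in ω, (ω.indicator h) (φ t x) := by
          refine setLIntegral_congr_fun hω (fun x hx => ?_)
          rw [Set.indicator_of_mem (hmaps hx)]
      _ ≤ ∫⁻ x, (ω.indicator h) (φ t x) := setLIntegral_le_lintegral _ _
      _ ≤ M * ∫⁻ y, ω.indicator h y :=
          aux_cov ((hφLip t ht).continuous.measurable) (hψLip t ht) (hφpre t ht) hind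
      _ = M * ∫⁻ y in ω, h y := by rw [lintegral_indicator hω]
  have step_ψ1 : ∀ h : ((Fin d) → ℝ) → ℝ≥0∞, Measurable h →
      (∫⁻ x in ω, h (ψ 1 x)) ≤ M * ∫⁻ y in ω, h y := by
    intro h mh
    have hmaps : Set.MapsTo (ψ 1) ω ω := by
      intro x hx
      obtain ⟨y, hy, hyx⟩ := (hbij 1 h1m).1.surjOn hx
      rw [← hyx, (hbij 1 h1m).2.1 y]; exact hy
    have hind : Measurable (ω.indicator h) := mh.indicator hω
    calc ∫⁻ x in ω, h (ψ 1 x)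
        = ∫⁻ x in ω, (ω.indicator h) (ψ 1 x) := by
          refine setLIntegral_congr_fun hω (fun x hx => ?_)
          rw [Set.indicator_of_mem (hmaps hx)]
      _ ≤ ∫⁻ x, (ω.indicator h) (ψ 1 x) := setLIntegral_le_lintegral _ _
      _ ≤ M * ∫⁻ y, ω.indicator h y :=
          aux_cov ((hψLip 1 h1m).continuous.measurable) (hφLip 1 h1m) (hψpre 1 h1m) hind
      _ = M * ∫⁻ y in ω, h y := by rw [lintegral_indicator hω]
  -- the base integrand
  have hgm_base : Measurable fun p : ℝ × ((Fin d) → ℝ) => fderiv ℝ I p (1, u p) := by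
    have m2 : Measurable (fderiv ℝ I) := measurable_fderiv ℝ I
    have vcont : Continuous fun p : ℝ × ((Fin d) → ℝ) => ((1:ℝ), u p) :=
      continuous_const.prodMk hu_cont
    exact (isBoundedBilinearMap_apply.continuous.measurable).comp (m2.prodMk vcont.measurable)
  set R : ℝ × ((Fin d) → ℝ) → ℝ≥0∞ :=
    fun p => ENNReal.ofReal ((I p) ^ 2) + ENNReal.ofReal ((fderiv ℝ I p (1, u p)) ^ 2) with hRdef
  have hRm : Measurable R :=
    ((hI.continuous.measurable.pow_const 2).ennreal_ofReal).add
      ((hgm_base.pow_const 2).ennreal_ofReal)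
  have hRint : ∫⁻ p, R p ∂(μ1.prod μ2) = A + B := by
    rw [hprod, hRdef, hAdef, hBdef]
    exact lintegral_add_left ((hI.continuous.measurable.pow_const 2).ennreal_ofReal) _
  have hQR : ∀ t ∈ Set.Icc (0:ℝ) 1, ∀ x, Q (t, x) = R (t, φ t x) := by
    intro t ht x
    simp only [hQdef, hRdef, hFcdef, hgcdef, hΦdef, hcl_eq t ht]
  -- the main estimate on the product
  have hA' : ∫⁻ p, Q p ∂(μ1.prod μ2) ≤ M * (A + B) := by
    rw [lintegral_prod _ hQm.aemeasurable]
    have hbound : ∀ᵐ t ∂μ1, (∫⁻ x, Q (t, x) ∂μ2) ≤ M * ∫⁻ y, R (t, y) ∂μ2 := by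
      rw [hμ1]
      filter_upwards [ae_restrict_mem measurableSet_Icc] with t ht
      have heq : (∫⁻ x, Q (t, x) ∂μ2) = ∫⁻ x in ω, (fun y => R (t, y)) (φ t x) := by
        rw [hμ2]; exact lintegral_congr fun x => hQR t ht x
      rw [heq, hμ2]
      exact step_φ t ht _ (hRm.comp (measurable_const.prodMk measurable_id))
    calc ∫⁻ t, (∫⁻ x, Q (t, x) ∂μ2) ∂μ1 ≤ ∫⁻ t, (M * ∫⁻ y, R (t, y) ∂μ2) ∂μ1 :=
          lintegral_mono_ae hbound
      _ = M * ∫⁻ t, (∫⁻ y, R (t, y) ∂μ2) ∂μ1 := lintegral_const_mul' M _ hM_ne_top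
      _ = M * ∫⁻ p, R p ∂(μ1.prod μ2) := by rw [lintegral_prod _ hRm.aemeasurable]
      _ = M * (A + B) := by rw [hRint]
  have hMABne : M * (A + B) ≠ ⊤ := ENNReal.mul_ne_top hM_ne_top hABne
  -- swap the order of integration
  have hinner2m : Measurable fun x => ∫⁻ t, Q (t, x) ∂μ1 := hQm.lintegral_prod_left'
  have hswap : ∫⁻ p, Q p ∂(μ1.prod μ2) = ∫⁻ x, (∫⁻ t, Q (t, x) ∂μ1) ∂μ2 :=
    lintegral_prod_symm _ hQm.aemeasurable
  have hfin_ae : ∀ᵐ x ∂μ2, (∫⁻ t, Q (t, x) ∂μ1) < ⊤ :=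
    ae_lt_top hinner2m (by rw [← hswap]; exact (lt_of_le_of_lt hA' hMABne.lt_top).ne)
  -- pointwise estimate via FTC along flow lines
  have hclaim : ∀ x : (Fin d) → ℝ, (∫⁻ t, Q (t, x) ∂μ1) < ⊤ →
      ENNReal.ofReal ((I (0, x)) ^ 2) ≤ 2 * ∫⁻ t, Q (t, x) ∂μ1 ∧
      ENNReal.ofReal ((I (1, φ 1 x)) ^ 2) ≤ 2 * ∫⁻ t, Q (t, x) ∂μ1 := by
    intro x hx
    set F : ℝ → ℝ := fun t => I (t, φ t x) with hF
    set g : ℝ → ℝ := fun t => fderiv ℝ I (t, φ t x) (1, u (t, φ t x)) with hg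
    have hd : ∀ t, HasDerivAt F (g t) t := by
      intro t
      have hline : HasDerivAt (fun s : ℝ => (s, φ s x)) ((1:ℝ), u (t, φ t x)) t :=
        (hasDerivAt_id t).prodMk (hflow x t)
      exact (hI (t, φ t x)).hasFDerivAt.comp_hasDerivAt t hline
    have hlc : Continuous fun t : ℝ => (t, φ t x) :=
      continuous_id.prodMk (continuous_iff_continuousAt.2 fun s => (hflow x s).continuousAt)
    have mg : Measurable g := by
      have m2 : Measurable fun t : ℝ => fderiv ℝ I (t, φ t x) :=
        (measurable_fderiv ℝ I).comp hlc.measurable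
      have vb : Continuous fun t : ℝ => ((1:ℝ), u (t, φ t x)) :=
        continuous_const.prodMk (hu_cont.comp hlc)
      exact (isBoundedBilinearMap_apply.continuous.measurable).comp (m2.prodMk vb.measurable)
    have hFcont : Continuous F := hI.continuous.comp hlc
    have hinner_eq : (∫⁻ t, Q (t, x) ∂μ1) =
        ∫⁻ t in Set.Icc (0:ℝ) 1, (ENNReal.ofReal (F t ^ 2) + ENNReal.ofReal (g t ^ 2)) := by
      rw [hμ1]
      refine setLIntegral_congr_fun measurableSet_Icc (fun t ht => ?_)
      simp only [hQdef, hFcdef, hgcdef, hΦdef, hcl_eq t ht, hF, hg]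
    rw [hinner_eq] at hx ⊢
    have hFfin : ∫⁻ t in Set.Icc (0:ℝ) 1, ENNReal.ofReal (F t ^ 2) < ⊤ :=
      lt_of_le_of_lt (lintegral_mono fun t => le_self_add) hx
    have hgfin : ∫⁻ t in Set.Icc (0:ℝ) 1, ENNReal.ofReal (g t ^ 2) < ⊤ :=
      lt_of_le_of_lt (lintegral_mono fun t => le_add_self) hx
    have hF2int : IntegrableOn (fun t => F t ^ 2) (Set.Icc (0:ℝ) 1) volume := by
      refine ⟨(hFcont.pow 2).aestronglyMeasurable, ?_⟩
      rw [hasFiniteIntegral_iff_ofReal (ae_of_all _ fun t => sq_nonneg _)]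
      exact hFfin
    have hg2int : IntegrableOn (fun t => g t ^ 2) (Set.Icc (0:ℝ) 1) volume := by
      refine ⟨((mg.pow_const 2).aestronglyMeasurable), ?_⟩
      rw [hasFiniteIntegral_iff_ofReal (ae_of_all _ fun t => sq_nonneg _)]
      exact hgfin
    obtain ⟨h0, h1⟩ := aux_ftc hd mg hF2int hg2int
    set j := ∫ t in Set.Icc (0:ℝ) 1, (F t ^ 2 + g t ^ 2) with hjdef
    have hsumint : IntegrableOn (fun t => F t ^ 2 + g t ^ 2) (Set.Icc (0:ℝ) 1) volume :=
      hF2int.add hg2int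
    have hofj : ENNReal.ofReal j =
        ∫⁻ t in Set.Icc (0:ℝ) 1, (ENNReal.ofReal (F t ^ 2) + ENNReal.ofReal (g t ^ 2)) := by
      rw [hjdef, ofReal_integral_eq_lintegral_ofReal hsumint
        (ae_of_all _ fun t => by positivity)]
      exact lintegral_congr fun t => ENNReal.ofReal_add (sq_nonneg _) (sq_nonneg _)
    constructor
    · have hle : ENNReal.ofReal (F 0 ^ 2) ≤ ENNReal.ofReal (2 * j) := ENNReal.ofReal_le_ofReal h0
      rw [ENNReal.ofReal_mul (by norm_num : (0:ℝ) ≤ 2), hofj] at hle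
      have hF0 : F 0 = I (0, x) := by rw [hF]; simp only [hφ0]
      rw [hF0] at hle
      simpa [ENNReal.ofReal_ofNat] using hle
    · have hle : ENNReal.ofReal (F 1 ^ 2) ≤ ENNReal.ofReal (2 * j) := ENNReal.ofReal_le_ofReal h1
      rw [ENNReal.ofReal_mul (by norm_num : (0:ℝ) ≤ 2), hofj] at hle
      have hF1 : F 1 = I (1, φ 1 x) := rfl
      rw [hF1] at hle
      simpa [ENNReal.ofReal_ofNat] using hle
  -- trace at t = 0
  have hT0 : (∫⁻ x in ω, ENNReal.ofReal ((I (0, x)) ^ 2)) ≤ 2 * (M * (A + B)) := by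
    have hb : ∀ᵐ x ∂μ2, ENNReal.ofReal ((I (0, x)) ^ 2) ≤ 2 * ∫⁻ t, Q (t, x) ∂μ1 :=
      hfin_ae.mono fun x hx => (hclaim x hx).1
    calc (∫⁻ x in ω, ENNReal.ofReal ((I (0, x)) ^ 2))
        ≤ ∫⁻ x, (2 * ∫⁻ t, Q (t, x) ∂μ1) ∂μ2 := by rw [← hμ2]; exact lintegral_mono_ae hb
      _ = 2 * ∫⁻ x, (∫⁻ t, Q (t, x) ∂μ1) ∂μ2 := lintegral_const_mul' 2 _ (by norm_num)
      _ = 2 * ∫⁻ p, Q p ∂(μ1.prod μ2) := by rw [hswap]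
      _ ≤ 2 * (M * (A + B)) := mul_le_mul_right hA' 2
  -- trace at t = 1
  have hmeas1 : Measurable fun y : (Fin d) → ℝ => ENNReal.ofReal ((I (1, φ 1 y)) ^ 2) := by
    have hcy : Continuous fun y : (Fin d) → ℝ => I (1, φ 1 y) :=
      hI.continuous.comp (continuous_const.prodMk (hφLip 1 h1m).continuous)
    exact (hcy.measurable.pow_const 2).ennreal_ofReal
  have hT1 : (∫⁻ x in ω, ENNReal.ofReal ((I (1, x)) ^ 2)) ≤ M * (2 * (M * (A + B))) := by
    have heq : (∫⁻ x in ω, ENNReal.ofReal ((I (1, x)) ^ 2))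
        = ∫⁻ x in ω, (fun y => ENNReal.ofReal ((I (1, φ 1 y)) ^ 2)) (ψ 1 x) := by
      refine setLIntegral_congr_fun hω (fun x hx => ?_)
      simp only [(hbij 1 h1m).2.2 x]
    rw [heq]
    refine (step_ψ1 _ hmeas1).trans ?_
    refine mul_le_mul_right ?_ M
    have hb : ∀ᵐ y ∂μ2, ENNReal.ofReal ((I (1, φ 1 y)) ^ 2) ≤ 2 * ∫⁻ t, Q (t, y) ∂μ1 :=
      hfin_ae.mono fun y hy => (hclaim y hy).2
    calc (∫⁻ y in ω, ENNReal.ofReal ((I (1, φ 1 y)) ^ 2))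
        ≤ ∫⁻ y, (2 * ∫⁻ t, Q (t, y) ∂μ1) ∂μ2 := by rw [← hμ2]; exact lintegral_mono_ae hb
      _ = 2 * ∫⁻ y, (∫⁻ t, Q (t, y) ∂μ1) ∂μ2 := lintegral_const_mul' 2 _ (by norm_num)
      _ = 2 * ∫⁻ p, Q p ∂(μ1.prod μ2) := by rw [hswap]
      _ ≤ 2 * (M * (A + B)) := mul_le_mul_right hA' 2
  -- the common upper bound
  set W : ℝ≥0∞ := 2 * (M * M) * (A + B) with hWdef
  have hWne : W ≠ ⊤ := by
    rw [hWdef]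
    exact ENNReal.mul_ne_top (ENNReal.mul_ne_top (by norm_num)
      (ENNReal.mul_ne_top hM_ne_top hM_ne_top)) hABne
  have hT0W : (∫⁻ x in ω, ENNReal.ofReal ((I (0, x)) ^ 2)) ≤ W := by
    refine hT0.trans ?_
    rw [hWdef]
    calc 2 * (M * (A + B)) = 2 * (M * 1) * (A + B) := by ring
      _ ≤ 2 * (M * M) * (A + B) := by
          exact mul_le_mul' (mul_le_mul' le_rfl (mul_le_mul' le_rfl hM1)) le_rfl
  have hT1W : (∫⁻ x in ω, ENNReal.ofReal ((I (1, x)) ^ 2)) ≤ W := by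
    refine hT1.trans ?_
    rw [hWdef]
    apply le_of_eq
    ring
  -- convert to Bochner integrals
  have htrace : ∀ c : ℝ, (∫⁻ x in ω, ENNReal.ofReal ((I (c, x)) ^ 2)) ≤ W →
      (∫ x in ω, (I (c, x)) ^ 2) ≤
        (2 * (M * M).toReal + 1) * ((∫ p in S, (I p) ^ 2) + ∫ p in S, (fderiv ℝ I p (1, u p)) ^ 2) := by
    intro c hle
    have hc : Continuous fun x => (I (c, x)) ^ 2 :=
      (hI.continuous.comp (continuous_const.prodMk continuous_id)).pow 2
    have hnn : 0 ≤ᵐ[volume.restrict ω] fun x => (I (c, x)) ^ 2 :=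
      ae_of_all _ fun x => sq_nonneg _
    have heq := integral_eq_lintegral_of_nonneg_ae hnn hc.aestronglyMeasurable
    rw [heq]
    have htr : (∫⁻ x in ω, ENNReal.ofReal ((I (c, x)) ^ 2)).toReal ≤ W.toReal :=
      ENNReal.toReal_mono hWne hle
    refine htr.trans ?_
    have hWto : W.toReal = 2 * (M * M).toReal * (A.toReal + B.toReal) := by
      rw [hWdef, ENNReal.toReal_mul, ENNReal.toReal_mul, ENNReal.toReal_add hAne hBne,
        ENNReal.toReal_ofNat]
    rw [hWto, hAtoReal, hBtoReal]
    have hsum_nn : 0 ≤ (∫ p in S, (I p) ^ 2) + ∫ p in S, (fderiv ℝ I p (1, u p)) ^ 2 := by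
      have := integral_nonneg (μ := volume.restrict S) (f := fun p => (I p) ^ 2) (fun p => sq_nonneg (I p))
      have := integral_nonneg (μ := volume.restrict S) (f := fun p => (fderiv ℝ I p (1, u p)) ^ 2)
        (fun p => sq_nonneg (fderiv ℝ I p (1, u p)))
      linarith
    nlinarith [ENNReal.toReal_nonneg (a := M * M)]
  exact ⟨htrace 0 hT0W, htrace 1 hT1W⟩
end
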